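/- (Biggs's level bounds.) Let G = (V,E) be a finite connected simple graph with at least two vertices and sink s ∈ V. Then every recurrent sandpile configuration σ satisfies 0 ≤ level(σ) ≤ |E| − |V| + 1. -/

import Mathlib

open scoped Classical

/-- One toppling step for sandpiles on `G` with sink `s`. -/
def SandTopple {V : Type*} [Fintype V] [DecidableEq V] (G : SimpleGraph V)
    [DecidableRel G.Adj] (s : V) (σ σ' : {v : V // v ≠ s} → ℕ) : Prop :=
  ∃ v : {v : V // v ≠ s}, G.degree (v : V) ≤ σ v ∧
    σ' = fun u => if u = v then σ v - G.degree (v : V)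
                  else σ u + (if G.Adj (u : V) (v : V) then 1 else 0)

/-- A sandpile configuration is stable if every non-sink vertex has fewer grains than
its degree. -/
def SandStable {V : Type*} [Fintype V] [DecidableEq V] (G : SimpleGraph V)
    [DecidableRel G.Adj] (s : V) (σ : {v : V // v ≠ s} → ℕ) : Prop :=
  ∀ v, σ v < G.degree (v : V)

/-- A stable configuration `σ` is recurrent if from any configuration `η` one can add
some configuration `ξ` and topple finitely many times to reach `σ`. -/
def SandRecurrent {V : Type*} [Fintype V] [DecidableEq V] (G : SimpleGraph V)
    [DecidableRel G.Adj] (s : V) (σ : {v : V // v ≠ s} → ℕ) : Prop :=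
  SandStable G s σ ∧
  ∀ η : {v : V // v ≠ s} → ℕ, ∃ ξ : {v : V // v ≠ s} → ℕ,
    Relation.ReflTransGen (SandTopple G s) (η + ξ) σ

section Aux

variable {V : Type*} [Fintype V] [DecidableEq V] (G : SimpleGraph V)
    [DecidableRel G.Adj] (s : V)

/-- degree inside a set `A` of non-sink vertices -/
noncomputable def degIn (A : Finset {v : V // v ≠ s}) (v : {v : V // v ≠ s}) : ℕ :=
  (A.filter fun u : {v : V // v ≠ s} => G.Adj (u : V) (v : V)).card

lemma degIn_le_degree (A : Finset {v : V // v ≠ s}) (v : {v : V // v ≠ s}) :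
    degIn G s A v ≤ G.degree (v : V) := by
  rw [degIn, ← SimpleGraph.card_neighborFinset_eq_degree]
  apply Finset.card_le_card_of_injOn (Subtype.val)
  · intro u hu
    simp only [Finset.mem_coe, Finset.mem_filter] at hu
    simp [SimpleGraph.mem_neighborFinset, hu.2.symm]
  · exact Subtype.val_injective.injOn

/-- forbidden subconfiguration -/
def FSC (σ : {v : V // v ≠ s} → ℕ) : Prop :=
  ∃ A : Finset {v : V // v ≠ s}, A.Nonempty ∧ ∀ v ∈ A, σ v < degIn G s A v

lemma degIn_self_zero (v : {v : V // v ≠ s}) : degIn G s {v} v = 0 := by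
  simp [degIn, Finset.filter_singleton, G.irrefl]

end Aux

section Aux2

variable {V : Type*} [Fintype V] [DecidableEq V] (G : SimpleGraph V)
    [DecidableRel G.Adj] (s : V)

lemma filter_erase_adj (A : Finset {v : V // v ≠ s}) (w v : {v : V // v ≠ s}) :
    (A.erase w).filter (fun u : {v : V // v ≠ s} => G.Adj (u : V) (v : V))
      = (A.filter fun u : {v : V // v ≠ s} => G.Adj (u : V) (v : V)).erase w := by
  ext u
  simp only [Finset.mem_filter, Finset.mem_erase]
  tauto

lemma degIn_erase (A : Finset {v : V // v ≠ s}) (w v : {v : V // v ≠ s}) (hw : w ∈ A) :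
    degIn G s A v = degIn G s (A.erase w) v
      + (if G.Adj (w : V) (v : V) then 1 else 0) := by
  rw [degIn, degIn, filter_erase_adj]
  by_cases h : G.Adj (w : V) (v : V)
  · rw [if_pos h, Finset.card_erase_add_one]
    simp [Finset.mem_filter, hw, h]
  · rw [if_neg h, Finset.erase_eq_of_notMem, add_zero]
    simp [Finset.mem_filter, h]

end Aux2

section Aux3

variable {V : Type*} [Fintype V] [DecidableEq V] (G : SimpleGraph V)
    [DecidableRel G.Adj] (s : V)

lemma fsc_topple {σ σ' : {v : V // v ≠ s} → ℕ}
    (h : SandTopple G s σ σ') (h' : FSC G s σ') : FSC G s σ := by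
  obtain ⟨w, hw, rfl⟩ := h
  obtain ⟨A, hA, hforb⟩ := h'
  by_cases hwA : w ∈ A
  · refine ⟨A.erase w, ?_, ?_⟩
    · rw [← Finset.card_pos, Finset.card_erase_of_mem hwA]
      have h1 : 1 < A.card := by
        by_contra hc
        push_neg at hc
        have : A = {w} :=
          Finset.eq_singleton_iff_unique_mem.mpr
            ⟨hwA, fun x hx => Finset.card_le_one.mp hc x hx w hwA⟩
        have h2 := hforb w hwA
        rw [this, degIn_self_zero] at h2
        exact absurd h2 (Nat.not_lt_zero _)
      omega
    · intro v hv
      have hvw : v ≠ w := (Finset.mem_erase.mp hv).1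
      have hvA : v ∈ A := (Finset.mem_erase.mp hv).2
      have := hforb v hvA
      simp only [if_neg hvw] at this
      rw [degIn_erase G s A w v hwA] at this
      have hsymm : G.Adj (v : V) (w : V) ↔ G.Adj (w : V) (v : V) := G.adj_comm _ _
      by_cases hadj : G.Adj (w : V) (v : V)
      · rw [if_pos hadj] at this
        rw [if_pos (hsymm.mpr hadj)] at this
        omega
      · rw [if_neg hadj] at this
        rw [if_neg (fun hc => hadj (hsymm.mp hc))] at this
        omega
  · refine ⟨A, hA, fun v hv => ?_⟩
    have hvw : v ≠ w := fun hc => hwA (hc ▸ hv)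
    have := hforb v hv
    simp only [if_neg hvw] at this
    omega

lemma fsc_reflTrans {σ σ' : {v : V // v ≠ s} → ℕ}
    (h : Relation.ReflTransGen (SandTopple G s) σ σ') (h' : FSC G s σ') :
    FSC G s σ := by
  induction h using Relation.ReflTransGen.head_induction_on with
  | refl => exact h'
  | head hstep _ ih => exact fsc_topple G s hstep ih

end Aux3

section Aux4

variable {V : Type*} [Fintype V] [DecidableEq V] (G : SimpleGraph V)
    [DecidableRel G.Adj] (s : V)

lemma sum_degIn_le {σ : {v : V // v ≠ s} → ℕ} (hno : ¬ FSC G s σ)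
    (A : Finset {v : V // v ≠ s}) :
    ∑ v ∈ A, degIn G s A v ≤ 2 * ∑ v ∈ A, σ v := by
  induction A using Finset.strongInduction with
  | _ A ih =>
    rcases A.eq_empty_or_nonempty with rfl | hA
    · simp
    · have : ∃ w ∈ A, degIn G s A w ≤ σ w := by
        by_contra hc
        push_neg at hc
        exact hno ⟨A, hA, hc⟩
      obtain ⟨w, hwA, hw⟩ := this
      set A' := A.erase w with hA'
      have hsub : A' ⊂ A := Finset.erase_ssubset hwA
      have key : ∑ v ∈ A, degIn G s A v
          = 2 * degIn G s A w + ∑ v ∈ A', degIn G s A' v := by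
        rw [← Finset.add_sum_erase _ _ hwA]
        have h1 : ∑ v ∈ A', degIn G s A v
            = ∑ v ∈ A', (degIn G s A' v + if G.Adj (w : V) (v : V) then 1 else 0) := by
          apply Finset.sum_congr rfl
          intro v _
          exact degIn_erase G s A w v hwA
        rw [h1, Finset.sum_add_distrib]
        have h2 : degIn G s A w = (A'.filter fun v : {v : V // v ≠ s} =>
            G.Adj (w : V) (v : V)).card := by
          rw [degIn]
          congr 1
          ext u
          simp only [Finset.mem_filter, Finset.mem_erase, hA']
          constructor
          · rintro ⟨hu, hadj⟩
            exact ⟨⟨fun hc => (G.irrefl (hc ▸ hadj)), hu⟩, hadj.symm⟩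
          · rintro ⟨⟨_, hu⟩, hadj⟩
            exact ⟨hu, hadj.symm⟩
        have h3 : (∑ v ∈ A', if G.Adj (w : V) (v : V) then 1 else 0)
            = (A'.filter fun v : {v : V // v ≠ s} =>
            G.Adj (w : V) (v : V)).card := by
          simp [Finset.sum_boole]
        omega
      rw [key, ← Finset.add_sum_erase _ _ hwA, ← hA']
      have := ih A' hsub
      omega

lemma card_filter_adj_eq_erase (v : V) :
    (Finset.univ.filter fun u : {v : V // v ≠ s} => G.Adj (u : V) v).card
      = ((Finset.univ.filter fun u : V => G.Adj u v).erase s).card := by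
  apply Finset.card_bij (fun (u : {v : V // v ≠ s}) _ => u.1)
  · intro u hu
    simp only [Finset.mem_filter, Finset.mem_univ, true_and] at hu
    simp [Finset.mem_erase, u.2, hu]
  · exact fun a _ b _ h => Subtype.val_injective h
  · intro x hx
    simp only [Finset.mem_erase, Finset.mem_filter, Finset.mem_univ, true_and] at hx
    exact ⟨⟨x, hx.1⟩, by simp [hx.2], rfl⟩

lemma filter_adj_eq_neighbor (v : V) :
    (Finset.univ.filter fun u : V => G.Adj u v) = G.neighborFinset v := by
  ext u
  simp [SimpleGraph.mem_neighborFinset, G.adj_comm]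

lemma degIn_univ (v : {v : V // v ≠ s}) :
    degIn G s Finset.univ v + (if G.Adj (v : V) s then 1 else 0)
      = G.degree (v : V) := by
  rw [degIn, card_filter_adj_eq_erase, filter_adj_eq_neighbor,
    ← SimpleGraph.card_neighborFinset_eq_degree]
  by_cases h : G.Adj (v : V) s
  · rw [if_pos h, Finset.card_erase_add_one]
    rw [SimpleGraph.mem_neighborFinset]
    exact h
  · rw [if_neg h, Finset.erase_eq_of_notMem, add_zero]
    rw [SimpleGraph.mem_neighborFinset]
    exact h

lemma sum_ite_adj_sink :
    ∑ v : {v : V // v ≠ s}, (if G.Adj (v : V) s then 1 else 0) = G.degree s := by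
  have hb : (∑ v : {v : V // v ≠ s}, if G.Adj (v : V) s then 1 else 0)
      = (Finset.univ.filter fun v : {v : V // v ≠ s} => G.Adj (v : V) s).card := by
    simp [Finset.sum_boole]
  rw [hb, ← SimpleGraph.card_neighborFinset_eq_degree]
  apply Finset.card_bij (fun (u : {v : V // v ≠ s}) _ => u.1)
  · intro u hu
    simp only [Finset.mem_filter, Finset.mem_univ, true_and] at hu
    rw [SimpleGraph.mem_neighborFinset]
    exact hu.symm
  · exact fun a _ b _ h => Subtype.val_injective h
  · intro x hx
    rw [SimpleGraph.mem_neighborFinset] at hx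
    exact ⟨⟨x, fun hc => G.irrefl (hc ▸ hx)⟩, by simp [hx.symm], rfl⟩

lemma sum_deg_subtype :
    ∑ v : {v : V // v ≠ s}, G.degree (v : V) + G.degree s
      = 2 * G.edgeFinset.card := by
  rw [← SimpleGraph.sum_degrees_eq_twice_card_edges]
  rw [← Finset.sum_erase_add Finset.univ _ (Finset.mem_univ s)]
  congr 1
  rw [Finset.sum_subtype (p := fun v : V => v ≠ s) (Finset.univ.erase s)
    (by intro x; simp [Finset.mem_erase]) (fun v => G.degree v)]

lemma card_subtype_ne : Fintype.card {v : V // v ≠ s} + 1 = Fintype.card V := by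
  have h1 : Fintype.card {v : V // v ≠ s} = Fintype.card V - 1 := by
    simp [Fintype.card_subtype_compl (· = s)]
  have h2 : 0 < Fintype.card V := Fintype.card_pos_iff.mpr ⟨s⟩
  omega

end Aux4

/-- **Biggs's level bounds.**  Every recurrent sandpile configuration `σ` on a finite
connected simple graph with at least two vertices satisfies
`0 ≤ level(σ) ≤ |E| − |V| + 1`, where `level(σ) = Σ_v σ(v) − |E| + deg(s)`. -/
theorem stmt_15 {V : Type*} [Fintype V] [DecidableEq V] (G : SimpleGraph V)
    [DecidableRel G.Adj] (s : V)
    (hV : 1 < Fintype.card V) (hconn : G.Connected)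
    (σ : {v : V // v ≠ s} → ℕ) (hσ : SandRecurrent G s σ) :
    0 ≤ (∑ v : {v : V // v ≠ s}, (σ v : ℤ)) - G.edgeFinset.card + G.degree s ∧
    (∑ v : {v : V // v ≠ s}, (σ v : ℤ)) - G.edgeFinset.card + G.degree s
      ≤ (G.edgeFinset.card : ℤ) - Fintype.card V + 1 := by
  obtain ⟨hstab, hrec⟩ := hσ
  have hno : ¬ FSC G s σ := by
    intro hfsc
    obtain ⟨ξ, hpath⟩ := hrec (fun v => G.degree (v : V))
    obtain ⟨A, hA, hforb⟩ := fsc_reflTrans G s hpath hfsc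
    obtain ⟨v, hv⟩ := hA
    have h0 := hforb v hv
    have h1 : G.degree (v : V) ≤ ((fun v : {v : V // v ≠ s} => G.degree (v : V)) + ξ) v := by
      simp
    have h2 := degIn_le_degree G s A v
    omega
  have hcount := sum_degIn_le G s hno Finset.univ
  have hsum1 : ∑ v : {v : V // v ≠ s}, degIn G s Finset.univ v + G.degree s
      = ∑ v : {v : V // v ≠ s}, G.degree (v : V) := by
    rw [← sum_ite_adj_sink G s, ← Finset.sum_add_distrib]
    exact Finset.sum_congr rfl fun v _ => degIn_univ G s v
  have hsum2 := sum_deg_subtype G s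
  have hcard := card_subtype_ne (V := V) s
  set T := ∑ v : {v : V // v ≠ s}, σ v with hT
  have hstabsum : T + Fintype.card {v : V // v ≠ s}
      ≤ ∑ v : {v : V // v ≠ s}, G.degree (v : V) := by
    calc T + Fintype.card {v : V // v ≠ s}
        = ∑ v : {v : V // v ≠ s}, (σ v + 1) := by
          rw [Finset.sum_add_distrib, hT]
          simp
      _ ≤ _ := Finset.sum_le_sum (fun v _ => hstab v)
  have hcast : (∑ v : {v : V // v ≠ s}, (σ v : ℤ)) = (T : ℤ) := by
    rw [hT]
    push_cast
    rfl
  rw [hcast]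
  omega
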